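/- Let E and F be nonempty finite sets, p : E → F a surjection, f : E → ℝ, and P a strictly positive probability distribution on F. On the set K = { Q ∈ P(E) : Σ_{x : p(x) = y} Q(x) = P(y) for all y ∈ F }, consider G(Q) = Σ_{x∈E} Q(x) f(x) − Σ_{y∈F} P(y) S(Q(·|y)), where Q(x|y) = Q(x)/P(y) if p(x) = y and 0 otherwise, and S(q) = −Σ_x q(x) ln q(x) with 0 ln 0 = 0. Then G attains its minimum over K uniquely at Q*(x) = P(p(x)) · e^{−f(x)} / Σ_{z : p(z) = p(x)} e^{−f(z)}, and the minimum value is −Σ_{y∈F} P(y) ln Σ_{z : p(z) = y} e^{−f(z)}. -/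
import Mathlib


-- Shannon entropy `S(q) = −∑_x q x ln (q x)` (with `0 ln 0 = 0`, as `Real.log 0 = 0`).
noncomputable def entropy {α : Type*} [Fintype α] (q : α → ℝ) : ℝ :=
  -∑ x, q x * Real.log (q x)

-- The conditional kernel `Q(x|y) = Q(x)/P(y)` if `p x = y`, and `0` otherwise.
noncomputable def condKer {E F : Type} [DecidableEq F] (p : E → F) (P : F → ℝ)
    (Q : E → ℝ) (y : F) (x : E) : ℝ :=
  if p x = y then Q x / P y else 0

open Classical in
-- Let `E`, `F` be nonempty finite sets, `p : E → F` a surjection, `f : E → ℝ`, and `P` a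
-- strictly positive probability distribution on `F`.  On
-- `K = {Q ∈ P(E) : ∑_{x, p x = y} Q x = P y for all y}` consider
-- `G(Q) = ∑_x Q x f x − ∑_y P y S(Q(·|y))`.  Then `G` attains its minimum over `K` uniquely
-- at `Q*(x) = P (p x) e^{−f x} / ∑_{z, p z = p x} e^{−f z}`, with minimum value
-- `−∑_y P y ln ∑_{z, p z = y} e^{−f z}`.
theorem stmt16 {E F : Type} [Fintype E] [Fintype F] [Nonempty E] [Nonempty F]
    [DecidableEq E] [DecidableEq F]
    (p : E → F) (hp : Function.Surjective p) (f : E → ℝ)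
    (P : F → ℝ) (hPpos : ∀ y, 0 < P y) (hPsum : ∑ y, P y = 1)
    (K : Set (E → ℝ))
    (hK : K = {Q : E → ℝ | (∀ x, 0 ≤ Q x) ∧ (∑ x, Q x) = 1 ∧
      ∀ y : F, (∑ x ∈ Finset.univ.filter (fun x => p x = y), Q x) = P y})
    (G : (E → ℝ) → ℝ)
    (hG : ∀ Q : E → ℝ, G Q = (∑ x, Q x * f x) - ∑ y, P y * entropy (condKer p P Q y))
    (Qstar : E → ℝ)
    (hQstar : ∀ x : E, Qstar x = P (p x) * Real.exp (-f x) /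
      ∑ z ∈ Finset.univ.filter (fun z => p z = p x), Real.exp (-f z)) :
    Qstar ∈ K ∧
    (∀ Q ∈ K, G Qstar ≤ G Q) ∧
    (∀ Q ∈ K, G Q = G Qstar → Q = Qstar) ∧
    G Qstar = -∑ y, P y * Real.log (∑ z ∈ Finset.univ.filter (fun z => p z = y),
      Real.exp (-f z)) := by
  classical
  set Z : F → ℝ := fun y => ∑ z ∈ Finset.univ.filter (fun z => p z = y), Real.exp (-f z)
    with hZdef
  have hZpos : ∀ y, 0 < Z y := by
    intro y
    obtain ⟨x, hx⟩ := hp y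
    refine Finset.sum_pos' (fun i _ => (Real.exp_pos _).le) ⟨x, by simp [hx], Real.exp_pos _⟩
  have hQs : ∀ x, Qstar x = P (p x) * Real.exp (-f x) / Z (p x) := hQstar
  have hQspos : ∀ x, 0 < Qstar x := fun x => by
    rw [hQs]; exact div_pos (mul_pos (hPpos _) (Real.exp_pos _)) (hZpos (p x))
  -- fiber sums of Qstar
  have hfib : ∀ y : F, (∑ x ∈ Finset.univ.filter (fun x => p x = y), Qstar x) = P y := by
    intro y
    have : ∀ x ∈ Finset.univ.filter (fun x => p x = y),
        Qstar x = P y * Real.exp (-f x) / Z y := by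
      intro x hx
      rw [Finset.mem_filter] at hx
      rw [hQs, hx.2]
    rw [Finset.sum_congr rfl this]
    rw [← Finset.sum_div, ← Finset.mul_sum]
    rw [show (∑ x ∈ Finset.univ.filter (fun x => p x = y), Real.exp (-f x)) = Z y from rfl]
    rw [mul_div_assoc, div_self (hZpos y).ne', mul_one]
  have hQsK : Qstar ∈ K := by
    rw [hK]
    refine ⟨fun x => (hQspos x).le, ?_, hfib⟩
    rw [← Finset.sum_fiberwise Finset.univ p Qstar]
    rw [Finset.sum_congr rfl (fun y _ => hfib y)]
    exact hPsum
  -- formula for G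
  have hGform : ∀ Q : E → ℝ,
      G Q = ∑ x, Q x * (f x + Real.log (Q x / P (p x))) := by
    intro Q
    rw [hG]
    have h1 : ∀ y : F, P y * entropy (condKer p P Q y)
        = -∑ x ∈ Finset.univ.filter (fun x => p x = y), Q x * Real.log (Q x / P y) := by
      intro y
      unfold entropy condKer
      rw [mul_neg, neg_inj, Finset.mul_sum]
      rw [Finset.sum_filter]
      refine Finset.sum_congr rfl (fun x _ => ?_)
      split
      · rw [← mul_assoc]
        congr 1
        rw [mul_comm, div_mul_cancel₀ _ (hPpos y).ne']
      · simp
    rw [Finset.sum_congr rfl (fun y _ => h1 y)]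
    rw [Finset.sum_neg_distrib, sub_neg_eq_add]
    have h2 : ∀ x : E, Q x * Real.log (Q x / P (p x))
        = (fun x => Q x * Real.log (Q x / P (p x))) x := fun _ => rfl
    rw [show (∑ y : F, ∑ x ∈ Finset.univ.filter (fun x => p x = y), Q x * Real.log (Q x / P y))
        = ∑ y : F, ∑ x ∈ Finset.univ.filter (fun x => p x = y),
          Q x * Real.log (Q x / P (p x)) from
      Finset.sum_congr rfl (fun y _ => Finset.sum_congr rfl (fun x hx => by
        rw [Finset.mem_filter] at hx; rw [hx.2]))]
    rw [Finset.sum_fiberwise Finset.univ p (fun x => Q x * Real.log (Q x / P (p x)))]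
    rw [← Finset.sum_add_distrib]
    exact Finset.sum_congr rfl (fun x _ => by ring)
  -- pointwise identity
  have hkey : ∀ (Q : E → ℝ) (x : E), 0 ≤ Q x →
      Q x * (f x + Real.log (Q x / P (p x)))
        = Q x * Real.log (Q x / Qstar x) - Q x * Real.log (Z (p x)) := by
    intro Q x hQx
    rcases eq_or_lt_of_le hQx with h | h
    · simp [← h]
    · have hq : Q x ≠ 0 := ne_of_gt h
      have hP : P (p x) ≠ 0 := (hPpos _).ne'
      have hZ : Z (p x) ≠ 0 := (hZpos _).ne'
      have hE : Real.exp (-f x) ≠ 0 := (Real.exp_pos _).ne'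
      rw [hQs x, Real.log_div hq hP,
        Real.log_div hq (div_ne_zero (mul_ne_zero hP hE) hZ),
        Real.log_div (mul_ne_zero hP hE) hZ, Real.log_mul hP hE, Real.log_exp]
      ring
  -- constant-on-fibers sum
  have hZsum : ∀ Q ∈ K, (∑ x, Q x * Real.log (Z (p x))) = ∑ y, P y * Real.log (Z y) := by
    intro Q hQ
    rw [hK] at hQ
    rw [← Finset.sum_fiberwise Finset.univ p (fun x => Q x * Real.log (Z (p x)))]
    refine Finset.sum_congr rfl (fun y _ => ?_)
    rw [show (∑ x ∈ Finset.univ.filter (fun x => p x = y), Q x * Real.log (Z (p x)))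
        = ∑ x ∈ Finset.univ.filter (fun x => p x = y), Q x * Real.log (Z y) from
      Finset.sum_congr rfl (fun x hx => by rw [Finset.mem_filter] at hx; rw [hx.2])]
    rw [← Finset.sum_mul, hQ.2.2 y]
  -- G decomposition on K
  have hGdec : ∀ Q ∈ K,
      G Q = (∑ x, Q x * Real.log (Q x / Qstar x)) - ∑ y, P y * Real.log (Z y) := by
    intro Q hQ
    have hQ' := hQ
    rw [hK] at hQ'
    rw [hGform Q,
      Finset.sum_congr rfl (fun x _ => hkey Q x (hQ'.1 x)),
      Finset.sum_sub_distrib, hZsum Q hQ]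
  -- KL of Qstar is zero
  have hDstar : (∑ x, Qstar x * Real.log (Qstar x / Qstar x)) = 0 := by
    refine Finset.sum_eq_zero (fun x _ => ?_)
    rw [div_self (hQspos x).ne', Real.log_one, mul_zero]
  have hGQs : G Qstar = -∑ y, P y * Real.log (Z y) := by
    rw [hGdec Qstar hQsK, hDstar, zero_sub]
  -- pointwise KL inequality
  have hterm : ∀ (Q : E → ℝ) (x : E), 0 ≤ Q x →
      Q x - Qstar x ≤ Q x * Real.log (Q x / Qstar x) := by
    intro Q x hQx
    rcases eq_or_lt_of_le hQx with h | h
    · rw [← h]; simp [(hQspos x).le]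
    · have h1 := Real.log_le_sub_one_of_pos (div_pos (hQspos x) h)
      have h2 : Real.log (Q x / Qstar x) = -Real.log (Qstar x / Q x) := by
        rw [Real.log_div h.ne' (hQspos x).ne', Real.log_div (hQspos x).ne' h.ne']; ring
      have h3 : Q x * (Qstar x / Q x - 1) = Qstar x - Q x := by field_simp
      nlinarith [mul_le_mul_of_nonneg_left h1 h.le]
  have hdiff : ∀ Q ∈ K, (∑ x, (Q x - Qstar x)) = 0 := by
    intro Q hQ
    rw [hK] at hQ
    rw [Finset.sum_sub_distrib, hQ.2.1]
    have : (∑ x, Qstar x) = 1 := by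
      have := hQsK; rw [hK] at this; exact this.2.1
    rw [this, sub_self]
  -- minimality
  have hmin : ∀ Q ∈ K, G Qstar ≤ G Q := by
    intro Q hQ
    have hQ' := hQ; rw [hK] at hQ'
    rw [hGdec Q hQ, hGQs]
    have : (0:ℝ) ≤ ∑ x, Q x * Real.log (Q x / Qstar x) := by
      calc (0:ℝ) = ∑ x, (Q x - Qstar x) := (hdiff Q hQ).symm
        _ ≤ ∑ x, Q x * Real.log (Q x / Qstar x) :=
          Finset.sum_le_sum (fun x _ => hterm Q x (hQ'.1 x))
    linarith
  refine ⟨hQsK, hmin, ?_, ?_⟩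
  · -- uniqueness
    intro Q hQ hGeq
    have hQ' := hQ; rw [hK] at hQ'
    have hD : (∑ x, Q x * Real.log (Q x / Qstar x)) = 0 := by
      have := hGdec Q hQ
      rw [hGeq, hGQs] at this
      linarith
    have hsum0 : (∑ x, (Q x * Real.log (Q x / Qstar x) - (Q x - Qstar x))) = 0 := by
      rw [Finset.sum_sub_distrib, hD, hdiff Q hQ, sub_zero]
    have heach := (Finset.sum_eq_zero_iff_of_nonneg
      (fun x _ => sub_nonneg.mpr (hterm Q x (hQ'.1 x)))).mp hsum0
    funext x
    have hx := heach x (Finset.mem_univ x)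
    have hx' : Q x * Real.log (Q x / Qstar x) = Q x - Qstar x := by linarith [sub_eq_zero.mp hx]
    by_contra hne
    rcases eq_or_lt_of_le (hQ'.1 x) with h | h
    · rw [← h] at hx'
      have hqs := hQspos x
      simp at hx'
      linarith
    · have hne1 : Qstar x / Q x ≠ 1 := by
        intro heq
        apply hne
        have h4 := (div_eq_iff h.ne').mp heq
        linarith
      have h1 := Real.log_lt_sub_one_of_pos (div_pos (hQspos x) h) hne1
      have h2 : Real.log (Q x / Qstar x) = -Real.log (Qstar x / Q x) := by
        rw [Real.log_div h.ne' (hQspos x).ne', Real.log_div (hQspos x).ne' h.ne']; ring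
      have h3 : Q x * (Qstar x / Q x - 1) = Qstar x - Q x := by field_simp
      nlinarith [mul_lt_mul_of_pos_left h1 h]
  · exact hGQs
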